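/- Let κ > 0, let h : ℝ → ℝ, and for t, y ∈ ℝ define H(t,y) := min over λ ∈ [0,1] of ( −λ·h(t) − (1−λ)·h(y) + κ·(1−λ)²·(y−t)² ). Then for every pair of real numbers t, y with h(y) ≥ h(t) and every real number Q ≥ 4κ·(y−t)², one has H(t,y) ≤ −h(y) + Q·log( 2 − exp( (h(t) − h(y))/Q ) ). -/

import Mathlib

/-- `H(t,y) = min_{λ ∈ [0,1]} ( -λ·h(t) - (1-λ)·h(y) + κ·(1-λ)²·(y-t)² )`. -/
noncomputable def Hfun (κ : ℝ) (h : ℝ → ℝ) (t y : ℝ) : ℝ :=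
  ⨅ l : Set.Icc (0 : ℝ) 1,
    (-(l : ℝ) * h t - (1 - (l : ℝ)) * h y + κ * (1 - (l : ℝ)) ^ 2 * (y - t) ^ 2)

/-- key analytic inequality: `e^(x - x²) + e^(-x) ≤ 2` for `0 ≤ x`. -/
lemma exp_sum_le_two {x : ℝ} (hx : 0 ≤ x) (hx2 : x ≤ 1 / 2) :
    Real.exp (x - x ^ 2) + Real.exp (-x) ≤ 2 := by
  have hp : x - x ^ 2 = (x - x ^ 2 / 2) + (-(x ^ 2 / 2)) := by ring
  have hm : -x = -(x - x ^ 2 / 2) + (-(x ^ 2 / 2)) := by ring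
  have hcosh := Real.cosh_le_exp_half_sq (x - x ^ 2 / 2)
  rw [Real.cosh_eq] at hcosh
  have h1 : Real.exp (x - x ^ 2) + Real.exp (-x)
      = (Real.exp (x - x ^ 2 / 2) + Real.exp (-(x - x ^ 2 / 2))) * Real.exp (-(x ^ 2 / 2)) := by
    rw [hp, hm, Real.exp_add, Real.exp_add]; ring
  rw [h1]
  have h2 : Real.exp (x - x ^ 2 / 2) + Real.exp (-(x - x ^ 2 / 2))
      ≤ 2 * Real.exp ((x - x ^ 2 / 2) ^ 2 / 2) := by linarith
  have h3 : (x - x ^ 2 / 2) ^ 2 / 2 ≤ x ^ 2 / 2 := by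
    have hx3 : 0 ≤ x * x * x := by positivity
    nlinarith [mul_le_mul_of_nonneg_left hx2 hx3]
  calc (Real.exp (x - x ^ 2 / 2) + Real.exp (-(x - x ^ 2 / 2))) * Real.exp (-(x ^ 2 / 2))
      ≤ 2 * Real.exp ((x - x ^ 2 / 2) ^ 2 / 2) * Real.exp (-(x ^ 2 / 2)) := by
        have := Real.exp_pos (-(x ^ 2 / 2)); nlinarith [Real.exp_pos (x - x ^ 2 / 2), Real.exp_pos (-(x - x ^ 2 / 2))]
    _ = 2 * Real.exp ((x - x ^ 2 / 2) ^ 2 / 2 + (-(x ^ 2 / 2))) := by rw [Real.exp_add]; ring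
    _ ≤ 2 * Real.exp 0 := by
        have : (x - x ^ 2 / 2) ^ 2 / 2 + (-(x ^ 2 / 2)) ≤ 0 := by linarith
        have := Real.exp_le_exp.mpr this
        linarith
    _ = 2 := by rw [Real.exp_zero]; norm_num

lemma Hfun_le (κ : ℝ) (h : ℝ → ℝ) (t y : ℝ) (ht2 : 0 ≤ κ) (l : ℝ) (hl0 : 0 ≤ l) (hl1 : l ≤ 1) :
    Hfun κ h t y ≤ -l * h t - (1 - l) * h y + κ * (1 - l) ^ 2 * (y - t) ^ 2 := by
  have hbdd : BddBelow (Set.range fun l : Set.Icc (0 : ℝ) 1 =>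
      (-(l : ℝ) * h t - (1 - (l : ℝ)) * h y + κ * (1 - (l : ℝ)) ^ 2 * (y - t) ^ 2)) := by
    refine ⟨-(|h t| + |h y|), ?_⟩
    rintro _ ⟨⟨m, hm0, hm1⟩, rfl⟩
    simp only
    have h1 : -m * h t ≥ -|h t| := by
      have h2 : |m * h t| ≤ |h t| := by
        rw [abs_mul]
        have : |m| ≤ 1 := abs_le.mpr ⟨by linarith, hm1⟩
        nlinarith [abs_nonneg (h t)]
      have h3 := le_abs_self (m * h t)
      linarith
    have h2 : -(1 - m) * h y ≥ -|h y| := by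
      have h2 : |(1 - m) * h y| ≤ |h y| := by
        rw [abs_mul]
        have : |1 - m| ≤ 1 := abs_le.mpr ⟨by linarith, by linarith⟩
        nlinarith [abs_nonneg (h y)]
      have h3 := le_abs_self ((1 - m) * h y)
      linarith
    nlinarith [sq_nonneg (1 - m), sq_nonneg (y - t), mul_nonneg (mul_nonneg ht2 (sq_nonneg (1 - m))) (sq_nonneg (y - t))]
  exact ciInf_le hbdd (⟨l, hl0, hl1⟩ : Set.Icc (0 : ℝ) 1)

theorem H_log_upper_bound (κ : ℝ) (hκ : 0 < κ) (h : ℝ → ℝ) (t y : ℝ)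
    (hty : h t ≤ h y) (Q : ℝ) (hQ : 4 * κ * (y - t) ^ 2 ≤ Q) :
    Hfun κ h t y ≤ -h y + Q * Real.log (2 - Real.exp ((h t - h y) / Q)) := by
  have hc : 0 ≤ κ * (y - t) ^ 2 := mul_nonneg hκ.le (sq_nonneg _)
  have hQ0 : 0 ≤ Q := le_trans (by nlinarith) hQ
  rcases eq_or_lt_of_le hQ0 with hQz | hQpos
  · -- Q = 0
    have hc0 : κ * (y - t) ^ 2 = 0 := by nlinarith
    have hle := Hfun_le κ h t y hκ.le 0 le_rfl zero_le_one
    rw [← hQz, zero_mul, add_zero]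
    nlinarith [hle, hc0]
  · -- Q > 0
    set D := h y - h t with hD
    have hD0 : 0 ≤ D := by simp [hD]; linarith
    set x := D / Q with hx
    have hx0 : 0 ≤ x := div_nonneg hD0 hQ0
    have hexp_arg : (h t - h y) / Q = -x := by rw [hx, hD]; ring
    rw [hexp_arg]
    rcases le_or_gt x (1 / 2) with hhalf | hhalf
    · -- choose λ = 1 - 2x
      have hle := Hfun_le κ h t y hκ.le (1 - 2 * x) (by linarith) (by linarith)
      have hkey : Real.exp (x - x ^ 2) + Real.exp (-x) ≤ 2 := exp_sum_le_two hx0 hhalf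
      have hpos : (0 : ℝ) < 2 - Real.exp (-x) := by
        have := Real.exp_pos (x - x ^ 2); linarith
      have hlog : x - x ^ 2 ≤ Real.log (2 - Real.exp (-x)) :=
        (Real.le_log_iff_exp_le hpos).mpr (by linarith)
      have hDx : D = Q * x := by rw [hx, mul_div_assoc', eq_div_iff hQpos.ne']; ring
      have hval : -(1 - 2 * x) * h t - (1 - (1 - 2 * x)) * h y
          + κ * (1 - (1 - 2 * x)) ^ 2 * (y - t) ^ 2
          ≤ -h y + Q * (x - x ^ 2) := by
        have hstep : κ * (1 - (1 - 2 * x)) ^ 2 * (y - t) ^ 2 ≤ Q * x ^ 2 := by nlinarith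
        have : -(1 - 2 * x) * h t - (1 - (1 - 2 * x)) * h y
            = -h y + D * (1 - 2 * x) := by rw [hD]; ring
        rw [this, hDx]; nlinarith
      calc Hfun κ h t y ≤ -h y + Q * (x - x ^ 2) := le_trans hle hval
        _ ≤ -h y + Q * Real.log (2 - Real.exp (-x)) := by nlinarith
    · -- x > 1/2 : choose λ = 0
      have hle := Hfun_le κ h t y hκ.le 0 le_rfl zero_le_one
      have he1 : Real.exp (1 / 4 : ℝ) ≤ 4 / 3 := by
        have h1 : (3 : ℝ) / 4 ≤ Real.exp (-(1 / 4)) := by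
          have := Real.add_one_le_exp (-(1 / 4) : ℝ); linarith
        rw [Real.exp_neg] at h1
        have h2 := (Real.exp_pos (1 / 4 : ℝ)).le
        have h3 := mul_le_mul_of_nonneg_left h1 h2
        rw [mul_inv_cancel₀ (Real.exp_pos (1 / 4 : ℝ)).ne'] at h3
        linarith
      have he2 : Real.exp (-x) ≤ 2 / 3 := by
        have h1 : Real.exp (-x) ≤ Real.exp (-(1 / 2 : ℝ)) :=
          Real.exp_le_exp.mpr (by linarith)
        have h2 : (3 : ℝ) / 2 ≤ Real.exp (1 / 2 : ℝ) := by
          have := Real.add_one_le_exp ((1 / 2) : ℝ); linarith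
        have h3 : Real.exp (-(1 / 2 : ℝ)) ≤ 2 / 3 := by
          rw [Real.exp_neg]
          have h4 := mul_le_mul_of_nonneg_left h2 (inv_nonneg.mpr (Real.exp_pos (1 / 2 : ℝ)).le)
          rw [inv_mul_cancel₀ (Real.exp_pos (1 / 2 : ℝ)).ne'] at h4
          nlinarith [inv_nonneg.mpr (Real.exp_pos (1 / 2 : ℝ)).le]
        linarith
      have hpos : (0 : ℝ) < 2 - Real.exp (-x) := by
        have := Real.exp_pos (1 / 4 : ℝ); linarith
      have hlog : (1 : ℝ) / 4 ≤ Real.log (2 - Real.exp (-x)) :=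
        (Real.le_log_iff_exp_le hpos).mpr (by linarith)
      calc Hfun κ h t y ≤ -0 * h t - (1 - 0) * h y + κ * (1 - 0) ^ 2 * (y - t) ^ 2 := hle
        _ = -h y + κ * (y - t) ^ 2 := by ring
        _ ≤ -h y + Q * (1 / 4) := by nlinarith
        _ ≤ -h y + Q * Real.log (2 - Real.exp (-x)) := by nlinarith
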